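/- arXiv:1202.5107 — 3 statements merged into one kernel-verified Lean document; each statement's English description precedes it below -/
import Mathlib

section
/- Sokhotski–Plemelj formula: let φ : ℝ → ℂ be a Schwartz function. Then the principal-value limit PV∫ φ(x)/x dx := lim_{ε→0⁺} ∫_{|x| ≥ ε} φ(x)/x dx exists, and lim_{ε→0⁺} ∫_ℝ φ(x)/(x + iε) dx = PV∫ φ(x)/x dx − iπ·φ(0). -/
open MeasureTheory Filter Topology
open Set Complex

namespace SPaux
variable (φ : SchwartzMap ℝ ℂ)

noncomputable def psi (x : ℝ) : ℂ := (φ x - φ (-x)) / (x : ℂ)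

lemma psi_meas : Measurable (psi φ) := by
  apply Measurable.div
  · exact (φ.continuous.measurable).sub (φ.continuous.measurable.comp measurable_neg)
  · exact Complex.measurable_ofReal

lemma exists_lip : ∃ K : ℝ, 0 ≤ K ∧ ∀ x : ℝ, ‖φ x - φ (-x)‖ ≤ K * |x| := by
  obtain ⟨C, hC0, hC⟩ := (SchwartzMap.derivCLM ℝ ℂ φ).decay 0 0
  have hd : ∀ x, ‖deriv φ x‖ ≤ C := by
    intro x
    have := hC x
    simpa [SchwartzMap.derivCLM_apply] using this
  have hlip : LipschitzWith (Real.toNNReal C) φ := by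
    apply lipschitzWith_of_nnnorm_deriv_le ((φ.smooth ⊤).differentiable (by norm_num))
    intro x
    rw [← NNReal.coe_le_coe]
    simpa [Real.coe_toNNReal _ hC0.le] using hd x
  refine ⟨2 * C, by positivity, fun x => ?_⟩
  have := hlip.dist_le_mul x (-x)
  rw [dist_eq_norm] at this
  calc ‖φ x - φ (-x)‖ ≤ C * dist x (-x) := by
        simpa [Real.coe_toNNReal _ hC0.le, dist_eq_norm] using this
    _ = 2 * C * |x| := by
        rw [dist_eq_norm]
        simp only [sub_neg_eq_add, Real.norm_eq_abs]
        rw [show x + x = 2 * x by ring, abs_mul]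
        simp [abs_of_nonneg]
        ring

lemma psi_integrableOn : IntegrableOn (psi φ) (Ioi 0) := by
  obtain ⟨K, hK0, hK⟩ := exists_lip φ
  obtain ⟨C, hC0, hC⟩ := φ.decay 1 0
  have hC' : ∀ x : ℝ, |x| * ‖φ x‖ ≤ C := by
    intro x; simpa [norm_iteratedFDeriv_zero] using hC x
  have hmeas : AEStronglyMeasurable (psi φ) (volume : Measure ℝ) := (psi_meas φ).aestronglyMeasurable
  have h1 : IntegrableOn (psi φ) (Ioc 0 1) := by
    refine Measure.integrableOn_of_bounded (M := K) measure_Ioc_lt_top.ne hmeas ?_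
    filter_upwards [ae_restrict_mem measurableSet_Ioc] with x hx
    have hx0 : (0:ℝ) < x := hx.1
    rw [psi, norm_div, Complex.norm_real, Real.norm_eq_abs,
      div_le_iff₀ (by positivity)]
    exact hK x
  have h2 : IntegrableOn (psi φ) (Ioi 1) := by
    have hint : IntegrableOn (fun x : ℝ => 2 * C * x ^ (-2 : ℝ)) (Ioi 1) :=
      (integrableOn_Ioi_rpow_of_lt (by norm_num) one_pos).const_mul _
    apply Integrable.mono' hint hmeas.restrict
    filter_upwards [ae_restrict_mem measurableSet_Ioi] with x hx
    have hx1 : (1:ℝ) < x := hx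
    have hx0 : (0:ℝ) < x := by linarith
    rw [psi, norm_div, Complex.norm_real, Real.norm_eq_abs, abs_of_pos hx0,
      div_le_iff₀ hx0, Real.rpow_neg hx0.le]
    have h1 : ‖φ x‖ ≤ C / x := by
      rw [le_div_iff₀ hx0]
      calc ‖φ x‖ * x = |x| * ‖φ x‖ := by rw [abs_of_pos hx0]; ring
        _ ≤ C := hC' x
    have h2' : ‖φ (-x)‖ ≤ C / x := by
      rw [le_div_iff₀ hx0]
      calc ‖φ (-x)‖ * x = |(-x)| * ‖φ (-x)‖ := by rw [abs_neg, abs_of_pos hx0]; ring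
        _ ≤ C := hC' (-x)
    calc ‖φ x - φ (-x)‖ ≤ ‖φ x‖ + ‖φ (-x)‖ := norm_sub_le _ _
      _ ≤ C / x + C / x := add_le_add h1 h2'
      _ = 2 * C * (x ^ (2:ℝ))⁻¹ * x := by
          rw [show (x:ℝ) ^ (2:ℝ) = x ^ (2:ℕ) by rw [← Real.rpow_natCast x 2]; norm_num]
          field_simp
          ring
  have : Ioi (0:ℝ) = Ioc 0 1 ∪ Ioi 1 := (Ioc_union_Ioi_eq_Ioi (by norm_num)).symm
  rw [this]
  exact h1.union h2

lemma f0_meas : Measurable (fun x : ℝ => φ x / (x:ℂ)) := by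
  apply Measurable.div
  · exact φ.continuous.measurable
  · exact Complex.measurable_ofReal

lemma integrableOn_away {ε : ℝ} (hε : 0 < ε) :
    IntegrableOn (fun x : ℝ => φ x / (x:ℂ)) {x : ℝ | ε ≤ |x|} := by
  have hmble : MeasurableSet {x : ℝ | ε ≤ |x|} :=
    measurableSet_le measurable_const measurable_abs
  apply Integrable.mono' ((φ.integrable.norm.const_mul ε⁻¹).restrict)
    (f0_meas φ).aestronglyMeasurable.restrict
  filter_upwards [ae_restrict_mem hmble] with x hx
  rw [norm_div, Complex.norm_real, Real.norm_eq_abs,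
    div_le_iff₀ (lt_of_lt_of_le hε hx)]
  have h1 : (1:ℝ) ≤ ε⁻¹ * |x| := by
    rw [← div_eq_inv_mul]
    exact (one_le_div hε).mpr hx
  calc ‖φ x‖ = ‖φ x‖ * 1 := by ring
    _ ≤ ‖φ x‖ * (ε⁻¹ * |x|) := by
        exact mul_le_mul_of_nonneg_left h1 (norm_nonneg _)
    _ = ε⁻¹ * ‖φ x‖ * |x| := by ring

lemma trunc_eq {ε : ℝ} (hε : 0 < ε) :
    ∫ x in {x : ℝ | ε ≤ |x|}, φ x / (x:ℂ) = ∫ x in Ioi ε, psi φ x := by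
  have hset : {x : ℝ | ε ≤ |x|} = Iic (-ε) ∪ Ici ε := by
    ext x
    simp only [mem_setOf_eq, mem_union, mem_Iic, mem_Ici, le_abs]
    constructor
    · rintro (h | h)
      · right; exact h
      · left; linarith
    · rintro (h | h)
      · right; linarith
      · left; exact h
  have hsub1 : Iic (-ε) ⊆ {x : ℝ | ε ≤ |x|} := by
    intro x hx; rw [mem_Iic] at hx
    exact le_abs.mpr (Or.inr (show ε ≤ -x by linarith))
  have hsub2 : Ici ε ⊆ {x : ℝ | ε ≤ |x|} := by
    intro x hx; rw [mem_Ici] at hx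
    exact le_abs.mpr (Or.inl hx)
  have hI1 := (integrableOn_away φ hε).mono_set hsub1
  have hI2 := (integrableOn_away φ hε).mono_set hsub2
  have hdisj : Disjoint (Iic (-ε)) (Ici ε) := Iic_disjoint_Ici.mpr (not_le.mpr (by linarith))
  rw [hset, setIntegral_union hdisj measurableSet_Ici hI1 hI2]
  have h3 : ∫ x in Iic (-ε), φ x / (x:ℂ) = ∫ x in Ioi ε, φ (-x) / (((-x : ℝ)):ℂ) :=
    (integral_comp_neg_Ioi ε (fun y => φ y / (y:ℂ))).symm
  have hneg : IntegrableOn (fun x : ℝ => φ (-x) / (((-x : ℝ)):ℂ)) (Ioi ε) := by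
    apply Integrable.mono' ((φ.integrable.comp_neg.norm.const_mul ε⁻¹).restrict)
    · apply Measurable.aestronglyMeasurable
      exact ((φ.continuous.measurable.comp measurable_neg).div
        (Complex.measurable_ofReal.comp measurable_neg))
    · filter_upwards [ae_restrict_mem measurableSet_Ioi] with x hx
      have hx0 : ε ≤ |(-x : ℝ)| := by
        rw [abs_neg, abs_of_pos (lt_trans hε hx)]; exact le_of_lt hx
      rw [norm_div, Complex.norm_real, Real.norm_eq_abs,
        div_le_iff₀ (lt_of_lt_of_le hε hx0)]
      have h1 : (1:ℝ) ≤ ε⁻¹ * |(-x:ℝ)| := by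
        rw [← div_eq_inv_mul]
        exact (one_le_div hε).mpr hx0
      calc ‖φ (-x)‖ = ‖φ (-x)‖ * 1 := by ring
        _ ≤ ‖φ (-x)‖ * (ε⁻¹ * |(-x:ℝ)|) := mul_le_mul_of_nonneg_left h1 (norm_nonneg _)
        _ = ε⁻¹ * ‖φ (-x)‖ * |(-x:ℝ)| := by ring
  have hpos : IntegrableOn (fun x : ℝ => φ x / (x:ℂ)) (Ioi ε) :=
    hI2.mono_set Ioi_subset_Ici_self
  rw [h3, integral_Ici_eq_integral_Ioi, ← integral_add hneg hpos]
  apply setIntegral_congr_fun measurableSet_Ioi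
  intro x hx
  have hx0 : (0:ℝ) < x := lt_trans hε hx
  have hxc : (x:ℂ) ≠ 0 := Complex.ofReal_ne_zero.mpr hx0.ne'
  simp only [psi]
  push_cast
  field_simp
  ring

lemma tendsto_trunc :
    Tendsto (fun ε : ℝ => ∫ x in {x : ℝ | ε ≤ |x|}, φ x / (x:ℂ)) (𝓝[>] 0)
      (𝓝 (∫ x in Ioi (0:ℝ), psi φ x)) := by
  have key : Tendsto (fun ε : ℝ => ∫ x in Ioi (0:ℝ), (Ioi ε).indicator (psi φ) x) (𝓝[>] 0)
      (𝓝 (∫ x in Ioi (0:ℝ), psi φ x)) := by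
    apply tendsto_integral_filter_of_dominated_convergence (fun x => ‖psi φ x‖)
    · exact Eventually.of_forall fun ε =>
        ((psi_meas φ).indicator measurableSet_Ioi).aestronglyMeasurable
    · exact Eventually.of_forall fun ε => ae_of_all _ fun x => norm_indicator_le_norm_self _ _
    · exact (psi_integrableOn φ).norm
    · filter_upwards [ae_restrict_mem measurableSet_Ioi] with x hx
      have hx0 : (0:ℝ) < x := hx
      apply Tendsto.congr' _ (tendsto_const_nhds (x := psi φ x))
      filter_upwards [Ioo_mem_nhdsGT_of_mem (by exact ⟨le_refl (0:ℝ), hx0⟩)] with ε hε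
      exact (indicator_of_mem (by exact hε.2 : x ∈ Ioi ε) _).symm
  apply key.congr'
  filter_upwards [self_mem_nhdsWithin] with ε hε
  rw [setIntegral_indicator measurableSet_Ioi, Ioi_inter_Ioi,
    show ((0:ℝ) ⊔ ε) = ε from sup_eq_right.mpr (le_of_lt hε), ← trunc_eq φ hε]

lemma g_int : Integrable (fun x : ℝ => φ x + φ (-x)) := φ.integrable.add φ.integrable.comp_neg

lemma g_meas : Measurable (fun x : ℝ => φ x + φ (-x)) :=
  φ.continuous.measurable.add (φ.continuous.measurable.comp measurable_neg)

lemma hA_int {ε : ℝ} : IntegrableOn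
    (fun x : ℝ => psi φ x * ((x^2/(x^2+ε^2) : ℝ) : ℂ)) (Ioi 0) := by
  apply Integrable.mono' ((psi_integrableOn φ).norm)
  · exact ((psi_meas φ).mul (Complex.measurable_ofReal.comp
      ((measurable_id.pow_const 2).div ((measurable_id.pow_const 2).add_const _)))).aestronglyMeasurable
  · apply ae_of_all
    intro x
    rw [norm_mul, Complex.norm_real, Real.norm_eq_abs]
    rcases eq_or_ne (x^2+ε^2) 0 with h | h
    · simp only [h, div_zero, abs_zero, mul_zero]
      positivity
    · have hpos : 0 < x^2 + ε^2 := lt_of_le_of_ne (by positivity) (Ne.symm h)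
      have : |x^2/(x^2+ε^2)| ≤ 1 := by
        rw [_root_.abs_of_nonneg (show (0:ℝ) ≤ x^2/(x^2+ε^2) by positivity)]
        rw [div_le_one hpos]
        nlinarith [sq_nonneg ε]
      calc ‖psi φ x‖ * |x^2/(x^2+ε^2)| ≤ ‖psi φ x‖ * 1 :=
            mul_le_mul_of_nonneg_left this (norm_nonneg _)
        _ = ‖psi φ x‖ := mul_one _

lemma hB_int {ε : ℝ} (hε : 0 < ε) : IntegrableOn
    (fun x : ℝ => (φ x + φ (-x)) * ((ε/(x^2+ε^2) : ℝ) : ℂ)) (Ioi 0) := by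
  apply Integrable.mono' (((g_int φ).norm.const_mul ε⁻¹).restrict)
  · exact ((g_meas φ).mul (Complex.measurable_ofReal.comp
      ((measurable_const).div ((measurable_id.pow_const 2).add_const _)))).aestronglyMeasurable
  · apply ae_of_all
    intro x
    rw [norm_mul, Complex.norm_real, Real.norm_eq_abs]
    have hpos : 0 < x^2 + ε^2 := by positivity
    have h1 : |ε/(x^2+ε^2)| ≤ ε⁻¹ := by
      rw [_root_.abs_of_nonneg (show (0:ℝ) ≤ ε/(x^2+ε^2) by positivity)]
      calc ε/(x^2+ε^2) ≤ ε/(ε^2) := by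
            apply div_le_div_of_nonneg_left hε.le (by positivity)
            nlinarith [sq_nonneg x]
        _ = ε⁻¹ := by field_simp [pow_two]
    calc ‖φ x + φ (-x)‖ * |ε/(x^2+ε^2)| ≤ ‖φ x + φ (-x)‖ * ε⁻¹ :=
          mul_le_mul_of_nonneg_left h1 (norm_nonneg _)
      _ = ε⁻¹ * ‖φ x + φ (-x)‖ := mul_comm _ _

lemma full_int {ε : ℝ} (hε : 0 < ε) :
    Integrable (fun x : ℝ => φ x / ((x:ℂ) + ε * Complex.I)) := by
  apply Integrable.mono' (φ.integrable.norm.const_mul ε⁻¹)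
  · exact (φ.continuous.measurable.div
      ((Complex.measurable_ofReal).add_const _)).aestronglyMeasurable
  · apply ae_of_all
    intro x
    have him : ε ≤ ‖(x:ℂ) + ε * Complex.I‖ := by
      have h1 : ((x:ℂ) + ε * Complex.I).im = ε := by simp
      calc ε = |((x:ℂ) + ε * Complex.I).im| := by rw [h1, abs_of_pos hε]
        _ ≤ ‖(x:ℂ) + ε * Complex.I‖ := Complex.abs_im_le_norm _
    rw [norm_div]
    calc ‖φ x‖ / ‖(x:ℂ) + ε * Complex.I‖ ≤ ‖φ x‖ / ε :=
          div_le_div_of_nonneg_left (norm_nonneg _) hε him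
      _ = ε⁻¹ * ‖φ x‖ := by rw [div_eq_inv_mul]

lemma full_eq {ε : ℝ} (hε : 0 < ε) :
    ∫ x : ℝ, φ x / ((x:ℂ) + ε * Complex.I)
      = (∫ x in Ioi 0, psi φ x * ((x^2/(x^2+ε^2) : ℝ) : ℂ))
        - Complex.I * ∫ x in Ioi 0, (φ x + φ (-x)) * ((ε/(x^2+ε^2) : ℝ) : ℂ) := by
  set f : ℝ → ℂ := fun x => φ x / ((x:ℂ) + ε * Complex.I) with hf
  have hfi := full_int φ hε
  have h1 : ∫ x : ℝ, f x = (∫ x in Iic (0:ℝ), f x) + ∫ x in Ioi (0:ℝ), f x :=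
    (intervalIntegral.integral_Iic_add_Ioi hfi.integrableOn hfi.integrableOn).symm
  have h2 : ∫ x in Iic (0:ℝ), f x = ∫ x in Ioi (0:ℝ), f (-x) := by
    rw [integral_comp_neg_Ioi, neg_zero]
  have h3 : IntegrableOn (fun x => f (-x)) (Ioi 0) := by
    have := (hfi.comp_neg).integrableOn (s := Ioi 0)
    exact this
  have h4 : (∫ x in Ioi (0:ℝ), f (-x)) + ∫ x in Ioi (0:ℝ), f x
      = ∫ x in Ioi (0:ℝ), (f (-x) + f x) := (integral_add h3 hfi.integrableOn).symm
  have h5 : ∫ x in Ioi (0:ℝ), (f (-x) + f x)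
      = ∫ x in Ioi (0:ℝ), (psi φ x * ((x^2/(x^2+ε^2) : ℝ) : ℂ)
          - Complex.I * ((φ x + φ (-x)) * ((ε/(x^2+ε^2) : ℝ) : ℂ))) := by
    apply setIntegral_congr_fun measurableSet_Ioi
    intro x hx
    have hx0 : (0:ℝ) < x := hx
    have hd : (0:ℝ) < x^2 + ε^2 := by positivity
    have hden : ((x:ℂ)^2 + (ε:ℂ)^2) ≠ 0 := by
      rw [show (x:ℂ)^2 + (ε:ℂ)^2 = ((x^2+ε^2 : ℝ) : ℂ) by push_cast; ring]
      exact Complex.ofReal_ne_zero.mpr hd.ne'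
    have hne1 : (x:ℂ) + ε * Complex.I ≠ 0 := by
      intro h
      have := congrArg Complex.im h
      simp at this
      exact hε.ne' this
    have hne2 : ((-x:ℝ):ℂ) + ε * Complex.I ≠ 0 := by
      intro h
      have := congrArg Complex.im h
      simp at this
      exact hε.ne' this
    have hxc : (x:ℂ) ≠ 0 := Complex.ofReal_ne_zero.mpr hx0.ne'
    have hkey : (((-x:ℝ):ℂ) + ε * Complex.I) * ((x:ℂ) + ε * Complex.I)
        = -((x:ℂ)^2 + (ε:ℂ)^2) := by
      push_cast
      linear_combination (ε:ℂ)^2 * Complex.I_sq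
    simp only [hf, psi]
    rw [div_add_div _ _ hne2 hne1, hkey,
      show ((x^2/(x^2+ε^2) : ℝ) : ℂ) = (x:ℂ)^2/((x:ℂ)^2+(ε:ℂ)^2) by push_cast; ring,
      show ((ε/(x^2+ε^2) : ℝ) : ℂ) = (ε:ℂ)/((x:ℂ)^2+(ε:ℂ)^2) by push_cast; ring,
      div_neg]
    push_cast
    field_simp
    ring
  rw [h1, h2, h4, h5]
  rw [integral_sub (hA_int φ) ?_]
  · rw [integral_const_mul]
  · exact (hB_int φ hε).const_mul _



lemma tendsto_A :
    Tendsto (fun ε : ℝ => ∫ x in Ioi (0:ℝ), psi φ x * ((x^2/(x^2+ε^2) : ℝ) : ℂ)) (𝓝[>] 0)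
      (𝓝 (∫ x in Ioi (0:ℝ), psi φ x)) := by
  apply tendsto_integral_filter_of_dominated_convergence (fun x => ‖psi φ x‖)
  · apply Eventually.of_forall
    intro ε
    exact ((psi_meas φ).mul (Complex.measurable_ofReal.comp
      ((measurable_id.pow_const 2).div ((measurable_id.pow_const 2).add_const _)))).aestronglyMeasurable
  · apply Eventually.of_forall
    intro ε
    apply ae_of_all
    intro x
    rw [norm_mul, Complex.norm_real, Real.norm_eq_abs]
    rcases eq_or_ne (x^2+ε^2) 0 with h | h
    · simp only [h, div_zero, abs_zero, mul_zero]
      positivity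
    · have hpos : 0 < x^2 + ε^2 := lt_of_le_of_ne (by positivity) (Ne.symm h)
      have h2 : |x^2/(x^2+ε^2)| ≤ 1 := by
        rw [_root_.abs_of_nonneg (show (0:ℝ) ≤ x^2/(x^2+ε^2) by positivity), div_le_one hpos]
        nlinarith [sq_nonneg ε]
      calc ‖psi φ x‖ * |x^2/(x^2+ε^2)| ≤ ‖psi φ x‖ * 1 :=
            mul_le_mul_of_nonneg_left h2 (norm_nonneg _)
        _ = ‖psi φ x‖ := mul_one _
  · exact (psi_integrableOn φ).norm
  · filter_upwards [ae_restrict_mem measurableSet_Ioi] with x hx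
    have hx0 : (0:ℝ) < x := hx
    have hx2 : (0:ℝ) < x^2 := by positivity
    have hr : Tendsto (fun ε : ℝ => x^2/(x^2+ε^2)) (𝓝 0) (𝓝 1) := by
      have hden : Tendsto (fun ε : ℝ => x^2+ε^2) (𝓝 0) (𝓝 (x^2)) := by
        have : Tendsto (fun ε : ℝ => x^2+ε^2) (𝓝 0) (𝓝 (x^2+0^2)) := by
          apply Tendsto.add tendsto_const_nhds
          exact (continuous_pow 2).tendsto 0
        simpa using this
      have := Tendsto.div (tendsto_const_nhds (x := x^2) (f := 𝓝 (0:ℝ))) hden hx2.ne'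
      rw [div_self hx2.ne'] at this
      exact this
    have hc : Tendsto (fun ε : ℝ => psi φ x * ((x^2/(x^2+ε^2) : ℝ) : ℂ)) (𝓝 0)
        (𝓝 (psi φ x)) := by
      have := (Complex.continuous_ofReal.tendsto 1).comp hr
      have h2 := Tendsto.mul (tendsto_const_nhds (x := psi φ x) (f := 𝓝 (0:ℝ))) this
      simpa using h2
    exact hc.mono_left nhdsWithin_le_nhds

lemma subst_B {ε : ℝ} (hε : 0 < ε) :
    ∫ x in Ioi (0:ℝ), (φ x + φ (-x)) * ((ε/(x^2+ε^2) : ℝ) : ℂ)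
      = ∫ t in Ioi (0:ℝ), (φ (ε*t) + φ (-(ε*t))) * ((1/(1+t^2) : ℝ) : ℂ) := by
  have key := integral_comp_mul_left_Ioi
    (fun x : ℝ => (φ x + φ (-x)) * ((ε/(x^2+ε^2) : ℝ) : ℂ)) 0 hε
  rw [mul_zero] at key
  have h2 : ∫ x in Ioi (0:ℝ), (φ x + φ (-x)) * ((ε/(x^2+ε^2) : ℝ) : ℂ)
      = ε • ∫ t in Ioi (0:ℝ), (φ (ε*t) + φ (-(ε*t))) * ((ε/((ε*t)^2+ε^2) : ℝ) : ℂ) := by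
    rw [key, smul_smul, mul_inv_cancel₀ hε.ne', one_smul]
  rw [h2, ← integral_smul]
  apply setIntegral_congr_fun measurableSet_Ioi
  intro t ht
  have ht0 : (0:ℝ) < t := ht
  have hden : (0:ℝ) < 1 + t^2 := by positivity
  have hsimp : ε * (ε / ((ε*t)^2 + ε^2)) = 1/(1+t^2) := by
    field_simp
    ring
  calc ε • ((φ (ε*t) + φ (-(ε*t))) * ((ε/((ε*t)^2+ε^2) : ℝ) : ℂ))
      = (φ (ε*t) + φ (-(ε*t))) * ((ε * (ε/((ε*t)^2+ε^2)) : ℝ) : ℂ) := by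
        rw [Complex.real_smul]
        push_cast
        ring
    _ = (φ (ε*t) + φ (-(ε*t))) * ((1/(1+t^2) : ℝ) : ℂ) := by rw [hsimp]

lemma tendsto_B :
    Tendsto (fun ε : ℝ => ∫ x in Ioi (0:ℝ), (φ x + φ (-x)) * ((ε/(x^2+ε^2) : ℝ) : ℂ)) (𝓝[>] 0)
      (𝓝 (Real.pi * φ 0)) := by
  obtain ⟨B, hB0, hB⟩ := φ.decay 0 0
  have hB' : ∀ x : ℝ, ‖φ x‖ ≤ B := by
    intro x; simpa [norm_iteratedFDeriv_zero] using hB x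
  have key : Tendsto (fun ε : ℝ => ∫ t in Ioi (0:ℝ), (φ (ε*t) + φ (-(ε*t))) * ((1/(1+t^2) : ℝ) : ℂ))
      (𝓝[>] 0) (𝓝 (∫ t in Ioi (0:ℝ), (φ 0 + φ 0) * ((1/(1+t^2) : ℝ) : ℂ))) := by
    apply tendsto_integral_filter_of_dominated_convergence (fun t => 2*B*(1+t^2)⁻¹)
    · apply Eventually.of_forall
      intro ε
      apply Continuous.aestronglyMeasurable
      apply Continuous.mul
      · exact (φ.continuous.comp (continuous_const.mul continuous_id)).add
          (φ.continuous.comp ((continuous_const.mul continuous_id).neg))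
      · exact Complex.continuous_ofReal.comp (continuous_const.div
          (continuous_const.add (continuous_pow 2)) (fun t => by positivity))
    · apply Eventually.of_forall
      intro ε
      apply ae_of_all
      intro t
      rw [norm_mul, Complex.norm_real, Real.norm_eq_abs,
        _root_.abs_of_nonneg (show (0:ℝ) ≤ 1/(1+t^2) by positivity)]
      have : ‖φ (ε*t) + φ (-(ε*t))‖ ≤ 2*B := by
        calc ‖φ (ε*t) + φ (-(ε*t))‖ ≤ ‖φ (ε*t)‖ + ‖φ (-(ε*t))‖ := norm_add_le _ _
          _ ≤ B + B := add_le_add (hB' _) (hB' _)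
          _ = 2*B := by ring
      calc ‖φ (ε*t) + φ (-(ε*t))‖ * (1/(1+t^2)) ≤ (2*B) * (1/(1+t^2)) := by
            apply mul_le_mul_of_nonneg_right this (by positivity)
        _ = 2*B*(1+t^2)⁻¹ := by rw [one_div]
    · exact ((integrable_inv_one_add_sq.const_mul (2*B)).restrict)
    · apply ae_of_all
      intro t
      have h1 : Tendsto (fun ε : ℝ => ε * t) (𝓝 0) (𝓝 0) := by
        have := (continuous_mul_right t).tendsto 0
        simpa using this
      have h2 : Tendsto (fun ε : ℝ => φ (ε*t) + φ (-(ε*t))) (𝓝 0) (𝓝 (φ 0 + φ 0)) := by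
        have ha := (φ.continuous.tendsto 0).comp h1
        have h1' : Tendsto (fun ε : ℝ => -(ε*t)) (𝓝 0) (𝓝 0) := by simpa using h1.neg
        have hb := (φ.continuous.tendsto 0).comp h1'
        exact ha.add hb
      have h3 := h2.mul (tendsto_const_nhds (x := ((1/(1+t^2) : ℝ) : ℂ)) (f := 𝓝 (0:ℝ)))
      exact h3.mono_left nhdsWithin_le_nhds
  have hval : ∫ t in Ioi (0:ℝ), (φ 0 + φ 0) * ((1/(1+t^2) : ℝ) : ℂ) = Real.pi * φ 0 := by
    have : ∀ t : ℝ, (φ 0 + φ 0) * ((1/(1+t^2) : ℝ) : ℂ) = ((1+t^2)⁻¹ : ℝ) • (φ 0 + φ 0) := by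
      intro t
      rw [Complex.real_smul, one_div]
      ring
    simp_rw [this]
    rw [integral_smul_const, integral_Ioi_inv_one_add_sq]
    simp only [Real.arctan_zero, sub_zero]
    rw [Complex.real_smul]
    push_cast
    ring
  have := key.congr' (Eventually.of_forall (fun ε => rfl))
  rw [hval] at key
  apply key.congr'
  filter_upwards [self_mem_nhdsWithin] with ε hε
  exact (subst_B φ hε).symm

end SPaux

theorem stmt_5 (φ : SchwartzMap ℝ ℂ) :
    ∃ PV : ℂ,
      Tendsto (fun ε : ℝ => ∫ x in {x : ℝ | ε ≤ |x|}, φ x / (x : ℂ))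
        (𝓝[>] 0) (𝓝 PV) ∧
      Tendsto (fun ε : ℝ => ∫ x : ℝ, φ x / ((x : ℂ) + ε * Complex.I))
        (𝓝[>] 0) (𝓝 (PV - Real.pi * Complex.I * φ 0)) := by
  refine ⟨∫ x in Set.Ioi (0:ℝ), SPaux.psi φ x, SPaux.tendsto_trunc φ, ?_⟩
  have hA := SPaux.tendsto_A φ
  have hB := (SPaux.tendsto_B φ).const_mul Complex.I
  have h := hA.sub hB
  have hval : (∫ x in Set.Ioi (0:ℝ), SPaux.psi φ x) - Complex.I * ((Real.pi : ℂ) * φ 0)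
      = (∫ x in Set.Ioi (0:ℝ), SPaux.psi φ x) - (Real.pi : ℂ) * Complex.I * φ 0 := by ring
  rw [hval] at h
  apply h.congr'
  filter_upwards [self_mem_nhdsWithin] with ε hε
  exact (SPaux.full_eq φ hε).symm
end

section
/- Boundary value of the complex logarithm: let φ : ℝ → ℂ be continuous with compact support. Then lim_{ε→0⁺} ∫_ℝ φ(x) · Log(x + iε) dx = ∫_ℝ φ(x) · log|x| dx + iπ · ∫_{(-∞,0)} φ(x) dx, where Log denotes the principal branch of the complex logarithm. In particular the distributional boundary value of Log(x + iε) as ε → 0⁺ is log|x| + iπ·Θ(−x), with Θ the Heaviside step function. -/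
open MeasureTheory Filter Topology Set

private lemma logIntOn01 : IntegrableOn Real.log (Set.Ioo 0 1) volume := by
  have hcont : ContinuousOn (fun x : ℝ => x + Real.negMulLog x) (Icc 0 1) :=
    (continuous_id.add Real.continuous_negMulLog).continuousOn
  have hderiv : ∀ x ∈ Ioo (0:ℝ) 1, HasDerivAt (fun x : ℝ => x + Real.negMulLog x)
      (-Real.log x) x := by
    intro x hx
    have h1 : HasDerivAt Real.negMulLog (-Real.log x - 1) x :=
      Real.hasDerivAt_negMulLog (ne_of_gt hx.1)
    have : HasDerivAt (fun x : ℝ => x + Real.negMulLog x) (1 + (-Real.log x - 1)) x :=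
      (hasDerivAt_id x).add h1
    convert this using 1
    ring
  have := intervalIntegral.integrableOn_deriv_of_nonneg hcont hderiv (fun x hx => by
    simp only [neg_nonneg]
    exact Real.log_nonpos hx.1.le hx.2.le)
  have h2 : IntegrableOn (fun x => -Real.log x) (Ioo (0:ℝ) 1) volume :=
    this.mono_set Ioo_subset_Ioc_self
  exact integrable_neg_iff.mp h2

private lemma logAbsIntOn (a : ℝ) (ha : 0 < a) :
    IntegrableOn (fun x : ℝ => Real.log |x|) (Set.Ioo (-a) a) volume := by
  have hpos : IntegrableOn (fun x : ℝ => Real.log |x|) (Ioo 0 a) volume := by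
    have hsub : Ioo (0:ℝ) a ⊆ Ioo 0 1 ∪ Icc 1 a := by
      intro x hx
      rcases lt_or_ge x 1 with h | h
      · exact Or.inl ⟨hx.1, h⟩
      · exact Or.inr ⟨h, hx.2.le⟩
    have hlog : IntegrableOn Real.log (Ioo 0 a) volume := by
      refine (logIntOn01.union ?_).mono_set hsub
      exact (Real.continuousOn_log.mono (fun x hx => by
        simp only [mem_compl_iff, mem_singleton_iff]
        intro h; rw [h] at hx; exact absurd hx.1 (by norm_num))).integrableOn_Icc
    exact hlog.congr_fun (fun x hx => by rw [abs_of_pos hx.1]) measurableSet_Ioo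
  have hneg : IntegrableOn (fun x : ℝ => Real.log |x|) (Ioo (-a) 0) volume := by
    have h1 : Integrable (Set.indicator (Ioo 0 a) (fun x : ℝ => Real.log |x|)) volume :=
      (integrable_indicator_iff measurableSet_Ioo).2 hpos
    have h2 := h1.comp_neg
    have h3 : (fun t : ℝ => Set.indicator (Ioo 0 a) (fun x : ℝ => Real.log |x|) (-t)) =
        Set.indicator (Ioo (-a) 0) (fun x : ℝ => Real.log |x|) := by
      funext t
      by_cases ht : t ∈ Ioo (-a) 0
      · have : -t ∈ Ioo (0:ℝ) a := ⟨by linarith [ht.2], by linarith [ht.1]⟩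
        rw [Set.indicator_of_mem this, Set.indicator_of_mem ht, abs_neg]
      · have : -t ∉ Ioo (0:ℝ) a := by
          intro h
          exact ht ⟨by linarith [h.2], by linarith [h.1]⟩
        rw [Set.indicator_of_notMem this, Set.indicator_of_notMem ht]
    rw [h3] at h2
    exact (integrable_indicator_iff measurableSet_Ioo).1 h2
  have hunion : Ioo (-a) 0 ∪ Ico 0 a = Ioo (-a) a :=
    Set.Ioo_union_Ico_eq_Ioo (by linarith) ha.le
  have hIco : IntegrableOn (fun x : ℝ => Real.log |x|) (Ico 0 a) volume :=
    (integrableOn_Ico_iff_integrableOn_Ioo).2 hpos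
  rw [← hunion]
  exact hneg.union hIco

theorem stmt_6 (φ : ℝ → ℂ) (hc : Continuous φ) (hs : HasCompactSupport φ) :
    Tendsto (fun ε : ℝ => ∫ x : ℝ, φ x * Complex.log ((x : ℂ) + ε * Complex.I))
      (𝓝[>] 0)
      (𝓝 ((∫ x : ℝ, φ x * (Real.log |x| : ℂ)) +
        Real.pi * Complex.I * ∫ x in Set.Iio (0 : ℝ), φ x)) := by
  classical
  -- support radius
  obtain ⟨r, hr⟩ := hs.isBounded.subset_closedBall 0
  set R : ℝ := max r 1 with hRdef
  have hR1 : (1:ℝ) ≤ R := le_max_right _ _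
  have hsupp : ∀ x : ℝ, x ∉ Icc (-R) R → φ x = 0 := by
    intro x hx
    apply image_eq_zero_of_notMem_tsupport
    intro hmem
    have := hr hmem
    rw [Real.closedBall_eq_Icc] at this
    have hrR : r ≤ R := le_max_left r 1
    have h1 : 0 - r ≤ x := this.1
    have h2 : x ≤ 0 + r := this.2
    exact hx ⟨by linarith, by linarith⟩
  -- bound on φ
  obtain ⟨C, hC'⟩ := hc.norm.bounded_above_of_compact_support hs.norm
  have hC : ∀ x : ℝ, ‖φ x‖ ≤ C := fun x => by simpa using hC' x
  have hC0 : 0 ≤ C := le_trans (norm_nonneg (φ 0)) (hC 0)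
  -- dominating function
  set g : ℝ → ℝ :=
    (Icc (-R) R).indicator (fun x => C * (abs (Real.log (abs x)) + (Real.log (R+1) + Real.pi)))
    with hgdef
  have hlogpos : 0 ≤ Real.log (R+1) := Real.log_nonneg (by linarith)
  have hg : Integrable g volume := by
    rw [hgdef, integrable_indicator_iff measurableSet_Icc]
    have h1 : IntegrableOn (fun x : ℝ => abs (Real.log (abs x))) (Icc (-R) R) volume := by
      refine ((logAbsIntOn (R+1) (by linarith)).mono_set ?_).abs
      intro x hx
      exact ⟨by linarith [hx.1], by linarith [hx.2]⟩
    exact ((h1.add (integrableOn_const measure_Icc_lt_top.ne)).const_mul C)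
  -- the pointwise bound
  have hkey : ∀ ε ∈ Ioc (0:ℝ) 1, ∀ x : ℝ, x ≠ 0 →
      ‖φ x * Complex.log ((x:ℂ) + ε * Complex.I)‖ ≤ g x := by
    intro ε hε x hx
    by_cases hxm : x ∈ Icc (-R) R
    · rw [hgdef, Set.indicator_of_mem hxm, norm_mul]
      set z : ℂ := (x:ℂ) + ε * Complex.I with hz
      have hre : z.re = x := by simp [hz]
      have him : z.im = ε := by simp [hz]
      have habs_ge : |x| ≤ ‖z‖ := by
        have := Complex.abs_re_le_norm z; rwa [hre] at this
      have habs_le : ‖z‖ ≤ R + 1 := by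
        have h1 : ‖z‖ ≤ ‖(x:ℂ)‖ + ‖(ε:ℂ) * Complex.I‖ :=
          norm_add_le _ _
        have h2 : ‖(x:ℂ)‖ = |x| := Complex.norm_real x
        have h3 : ‖(ε:ℂ) * Complex.I‖ = ε := by
          simp [abs_of_pos hε.1]
        have h4 : |x| ≤ R := abs_le.2 ⟨hxm.1, hxm.2⟩
        rw [h2, h3] at h1
        linarith [hε.2]
      have hz0 : (0:ℝ) < ‖z‖ := lt_of_lt_of_le (abs_pos.2 hx) habs_ge
      have hlogbd : |Real.log (‖z‖)| ≤ abs (Real.log (abs x)) + Real.log (R+1) := by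
        rcases le_or_gt (‖z‖) 1 with h | h
        · have h0 : Real.log (‖z‖) ≤ 0 := Real.log_nonpos hz0.le h
          rw [abs_of_nonpos h0]
          have h2 : Real.log |x| ≤ Real.log (‖z‖) :=
            Real.log_le_log (abs_pos.2 hx) habs_ge
          have h3 : -Real.log |x| ≤ abs (Real.log (abs x)) := neg_le_abs _
          linarith
        · rw [abs_of_pos (Real.log_pos h)]
          have h2 : Real.log (‖z‖) ≤ Real.log (R+1) :=
            Real.log_le_log hz0 habs_le
          have h3 : 0 ≤ abs (Real.log (abs x)) := abs_nonneg _
          linarith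
      have hnorm : ‖Complex.log z‖ ≤ abs (Real.log (abs x)) + (Real.log (R+1) + Real.pi) := by
        have h1 := Complex.norm_le_abs_re_add_abs_im (Complex.log z)
        rw [Complex.log_re, Complex.log_im] at h1
        have h2 := Complex.abs_arg_le_pi z
        linarith
      exact mul_le_mul (hC x) hnorm (norm_nonneg _) hC0
    · rw [hsupp x hxm, zero_mul, norm_zero, hgdef, Set.indicator_of_notMem hxm]
  -- a.e. nonzero
  have h0ae : ∀ᵐ x : ℝ, x ≠ 0 := by
    refine ae_iff.2 ?_
    simp [measure_singleton]
  -- limit function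
  set Lf : ℝ → ℂ := fun x => φ x * ((Real.log |x| : ℂ) +
      Set.indicator (Iio 0) (fun _ => (Real.pi:ℂ) * Complex.I) x) with hLfdef
  have hlim : ∀ᵐ x : ℝ, Tendsto (fun ε : ℝ => φ x * Complex.log ((x:ℂ) + ε * Complex.I))
      (𝓝[>] 0) (𝓝 (Lf x)) := by
    filter_upwards [h0ae] with x hx
    have htend0 : Tendsto (fun ε : ℝ => (x:ℂ) + ε * Complex.I) (𝓝[>] 0) (𝓝 (x:ℂ)) := by
      have hcont : Continuous fun ε : ℝ => (x:ℂ) + (ε:ℂ) * Complex.I := by continuity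
      simpa using (hcont.tendsto 0).mono_left
        (nhdsWithin_le_nhds (s := Set.Ioi (0:ℝ)) (a := (0:ℝ)))
    rcases hx.lt_or_gt with hlt | hgt
    · -- x < 0
      have h1 : Tendsto (fun ε : ℝ => (x:ℂ) + ε * Complex.I) (𝓝[>] 0)
          (𝓝[{z : ℂ | 0 ≤ z.im}] (x:ℂ)) := by
        refine tendsto_nhdsWithin_of_tendsto_nhds_of_eventually_within _ htend0 ?_
        filter_upwards [self_mem_nhdsWithin] with ε hε
        simp only [Set.mem_setOf_eq, Complex.add_im, Complex.ofReal_im, Complex.mul_im,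
          Complex.ofReal_re, Complex.I_im, Complex.I_re, mul_zero, mul_one, zero_add]
        simpa using (le_of_lt hε)
      have h2 := Complex.tendsto_log_nhdsWithin_im_nonneg_of_re_neg_of_im_zero
        (z := (x:ℂ)) (by simpa using hlt) (by simp)
      have h3 := h2.comp h1
      have h4 := tendsto_const_nhds (x := φ x) (f := 𝓝[>] (0:ℝ)) |>.mul h3
      have hxIio : x ∈ Iio (0:ℝ) := hlt
      rw [hLfdef]
      simp only [Set.indicator_of_mem hxIio]
      convert h4 using 2
      simp
      rw [Complex.norm_real, Real.norm_eq_abs]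
    · -- 0 < x
      have hslit : (x:ℂ) ∈ Complex.slitPlane := Complex.mem_slitPlane_iff.2
        (Or.inl (by simpa using hgt))
      have h3 := (continuousAt_clog hslit).tendsto.comp htend0
      have h4 := tendsto_const_nhds (x := φ x) (f := 𝓝[>] (0:ℝ)) |>.mul h3
      have hxIio : x ∉ Iio (0:ℝ) := by simp [not_lt.2 hgt.le]
      rw [hLfdef]
      simp only [Set.indicator_of_notMem hxIio, add_zero]
      convert h4 using 2
      · rfl
      rw [← Complex.ofReal_log hgt.le, Real.log_abs]
  -- measurability
  have hmeas : ∀ ε : ℝ, AEStronglyMeasurable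
      (fun x : ℝ => φ x * Complex.log ((x:ℂ) + ε * Complex.I)) volume := by
    intro ε
    refine hc.aestronglyMeasurable.mul ?_
    exact (Complex.measurable_log.comp
      ((Complex.continuous_ofReal.add continuous_const).measurable)).aestronglyMeasurable
  -- apply dominated convergence
  have hDCT := MeasureTheory.tendsto_integral_filter_of_dominated_convergence
    (μ := volume) (l := 𝓝[>] (0:ℝ))
    (F := fun (ε : ℝ) (x : ℝ) => φ x * Complex.log ((x:ℂ) + ε * Complex.I)) (f := Lf) g
    (Eventually.of_forall hmeas)
    (by
      filter_upwards [Ioc_mem_nhdsGT_of_mem (Set.mem_Ico.2 ⟨le_refl 0, zero_lt_one⟩)] with ε hε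
      filter_upwards [h0ae] with x hx
      exact hkey ε hε x hx)
    hg hlim
  -- identify the limit
  have hLfint : (∫ x : ℝ, Lf x) = (∫ x : ℝ, φ x * (Real.log |x| : ℂ)) +
      Real.pi * Complex.I * ∫ x in Set.Iio (0 : ℝ), φ x := by
    have hsplit : ∀ x : ℝ, Lf x = φ x * (Real.log |x| : ℂ) +
        Set.indicator (Iio 0) (fun y => (Real.pi:ℂ) * Complex.I * φ y) x := by
      intro x
      by_cases hx : x ∈ Iio (0:ℝ)
      · rw [hLfdef]
        simp only [Set.indicator_of_mem hx]
        ring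
      · rw [hLfdef]
        simp only [Set.indicator_of_notMem hx, add_zero]
    have hint1 : Integrable (fun x : ℝ => φ x * (Real.log |x| : ℂ)) volume := by
      refine Integrable.mono' hg ?_ ?_
      · refine hc.aestronglyMeasurable.mul ?_
        exact (Complex.measurable_ofReal.comp
          (Real.measurable_log.comp measurable_abs)).aestronglyMeasurable
      · refine Eventually.of_forall fun x => ?_
        by_cases hxm : x ∈ Icc (-R) R
        · rw [hgdef, Set.indicator_of_mem hxm, norm_mul]
          have h1 : ‖(Real.log |x| : ℂ)‖ = abs (Real.log (abs x)) := by
            rw [Complex.norm_real, Real.norm_eq_abs]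
          rw [h1]
          have : abs (Real.log (abs x)) ≤ abs (Real.log (abs x)) + (Real.log (R+1) + Real.pi) := by
            have := Real.pi_pos; linarith
          exact mul_le_mul (hC x) this (abs_nonneg _) hC0
        · rw [hsupp x hxm, zero_mul, norm_zero, hgdef, Set.indicator_of_notMem hxm]
    have hint2 : Integrable
        (Set.indicator (Iio 0) (fun y => (Real.pi:ℂ) * Complex.I * φ y)) volume :=
      ((hc.integrable_of_hasCompactSupport hs).const_mul _).indicator measurableSet_Iio
    calc (∫ x : ℝ, Lf x)
        = ∫ x : ℝ, (φ x * (Real.log |x| : ℂ) +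
            Set.indicator (Iio 0) (fun y => (Real.pi:ℂ) * Complex.I * φ y) x) := by
          exact integral_congr_ae (Eventually.of_forall hsplit)
      _ = (∫ x : ℝ, φ x * (Real.log |x| : ℂ)) +
            ∫ x : ℝ, Set.indicator (Iio 0) (fun y => (Real.pi:ℂ) * Complex.I * φ y) x :=
          integral_add hint1 hint2
      _ = (∫ x : ℝ, φ x * (Real.log |x| : ℂ)) +
            Real.pi * Complex.I * ∫ x in Set.Iio (0 : ℝ), φ x := by
          rw [integral_indicator measurableSet_Iio, MeasureTheory.integral_const_mul]
  rw [hLfint] at hDCT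
  exact hDCT
end

section
/- Multivariate Gaussian integral: let P be an n×n real symmetric positive-definite matrix. Then the function x ↦ exp(−(1/2) ⟨x, P x⟩) is integrable on ℝⁿ and ∫_{ℝⁿ} exp(−(1/2) xᵀ P x) dx = (2π)^{n/2} (det P)^{−1/2}. (In particular det P > 0, so the right-hand side is well defined.) -/
open MeasureTheory
open scoped Matrix RealInnerProductSpace

theorem stmt_10 {n : ℕ} (P : Matrix (Fin n) (Fin n) ℝ)
    (hsym : P.IsSymm)
    (hpos : ∀ x : EuclideanSpace ℝ (Fin n), x ≠ 0 → 0 < ∑ i, ∑ j, x i * P i j * x j) :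
    Integrable
      (fun x : EuclideanSpace ℝ (Fin n) =>
        Real.exp (-(1 / 2) * ∑ i, ∑ j, x i * P i j * x j)) ∧
    (∫ x : EuclideanSpace ℝ (Fin n),
        Real.exp (-(1 / 2) * ∑ i, ∑ j, x i * P i j * x j))
      = (2 * Real.pi) ^ ((n : ℝ) / 2) * P.det ^ (-(1 / 2) : ℝ) ∧
    0 < P.det := by
  classical
  have hherm : P.IsHermitian := by
    rw [Matrix.IsHermitian]
    ext i j
    simp only [Matrix.conjTranspose_apply, star_trivial]
    exact congrFun (congrFun hsym i) j
  have hquad : ∀ x : Fin n → ℝ,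
      dotProduct (star x) (P *ᵥ x) = ∑ i, ∑ j, x i * P i j * x j := by
    intro x
    simp [dotProduct, Matrix.mulVec, Finset.mul_sum, mul_assoc]
  have hP : P.PosDef := by
    refine Matrix.posDef_iff_dotProduct_mulVec.mpr ⟨hherm, fun x hx => ?_⟩
    rw [hquad]
    exact hpos (WithLp.toLp 2 x) (fun h => hx (by simpa using congrArg WithLp.ofLp h))
  set μ : Fin n → ℝ := hherm.eigenvalues with hμdef
  set b := hherm.eigenvectorBasis with hbdef
  have hμpos : ∀ i, 0 < μ i := hP.eigenvalues_pos
  have hdet : P.det = ∏ i, μ i := by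
    simpa using hherm.det_eq_prod_eigenvalues
  have hdetpos : 0 < P.det := hP.det_pos
  have hQ : ∀ x : EuclideanSpace ℝ (Fin n),
      ∑ i, ∑ j, x i * P i j * x j = ∑ i, μ i * (b.repr x i) ^ 2 := by
    intro x
    have h1 : (∑ i, ∑ j, x i * P i j * x j)
        = (inner ℝ x (Matrix.toEuclideanLin P x) : ℝ) := (hquad x).symm.trans (dotProduct_comm _ _)
    have h3 : ∀ i, Matrix.toEuclideanLin P (b i) = μ i • b i := by
      intro i
      have := hherm.mulVec_eigenvectorBasis i
      apply (WithLp.equiv 2 (Fin n → ℝ)).symm.injective.eq_iff.mpr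
      simpa [Matrix.toEuclideanLin_apply] using this
    have h2 : Matrix.toEuclideanLin P x = ∑ i, (b.repr x i * μ i) • b i := by
      conv_lhs => rw [← b.sum_repr x]
      rw [map_sum]
      refine Finset.sum_congr rfl fun i _ => ?_
      rw [LinearMap.map_smul, h3 i, smul_smul]
    rw [h1, h2, inner_sum]
    refine Finset.sum_congr rfl fun i _ => ?_
    rw [real_inner_smul_right, real_inner_comm, b.repr_apply_apply]
    ring
  have key : ∀ y : Fin n → ℝ,
      Real.exp (-(1 / 2) * ∑ i, ∑ j,
        (b.repr.symm ((MeasurableEquiv.toLp 2 (Fin n → ℝ)) y)) i * P i j *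
        (b.repr.symm ((MeasurableEquiv.toLp 2 (Fin n → ℝ)) y)) j)
      = ∏ i, Real.exp (-(μ i / 2) * (y i) ^ 2) := by
    intro y
    rw [hQ, ← Real.exp_sum]
    congr 1
    rw [Finset.mul_sum]
    refine Finset.sum_congr rfl fun i _ => ?_
    have : b.repr (b.repr.symm ((MeasurableEquiv.toLp 2 (Fin n → ℝ)) y)) i = y i := by
      rw [LinearIsometryEquiv.apply_symm_apply]
      rfl
    rw [this]
    ring
  have hmp1 : MeasurePreserving (⇑b.repr.symm ∘ ⇑(MeasurableEquiv.toLp 2 (Fin n → ℝ)))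
      volume volume :=
    b.measurePreserving_repr_symm.comp
      (EuclideanSpace.volume_preserving_symm_measurableEquiv_toLp (Fin n)).symm
  have hemb : MeasurableEmbedding (⇑b.repr.symm ∘ ⇑(MeasurableEquiv.toLp 2 (Fin n → ℝ))) :=
    b.repr.symm.toHomeomorph.measurableEmbedding.comp
      (MeasurableEquiv.measurableEmbedding _)
  have hintprod : Integrable (fun y : Fin n → ℝ => ∏ i, Real.exp (-(μ i / 2) * (y i) ^ 2)) :=
    Integrable.fintype_prod (f := fun i (v : ℝ) => Real.exp (-(μ i / 2) * v ^ 2))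
      fun i => integrable_exp_neg_mul_sq (half_pos (hμpos i))
  have hfun : (fun x : EuclideanSpace ℝ (Fin n) =>
        Real.exp (-(1 / 2) * ∑ i, ∑ j, x i * P i j * x j)) ∘
      (⇑b.repr.symm ∘ ⇑(MeasurableEquiv.toLp 2 (Fin n → ℝ)))
      = fun y : Fin n → ℝ => ∏ i, Real.exp (-(μ i / 2) * (y i) ^ 2) := by
    ext y
    exact key y
  have hint : Integrable
      (fun x : EuclideanSpace ℝ (Fin n) =>
        Real.exp (-(1 / 2) * ∑ i, ∑ j, x i * P i j * x j)) := by
    rw [← hmp1.integrable_comp_emb hemb, hfun]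
    exact hintprod
  have hI : (∫ x : EuclideanSpace ℝ (Fin n),
        Real.exp (-(1 / 2) * ∑ i, ∑ j, x i * P i j * x j))
      = ∏ i, Real.sqrt (Real.pi / (μ i / 2)) := by
    rw [← hmp1.integral_comp hemb]
    rw [show (fun y : Fin n → ℝ => (fun x : EuclideanSpace ℝ (Fin n) =>
        Real.exp (-(1 / 2) * ∑ i, ∑ j, x i * P i j * x j))
        ((⇑b.repr.symm ∘ ⇑(MeasurableEquiv.toLp 2 (Fin n → ℝ))) y))
        = fun y : Fin n → ℝ => ∏ i, Real.exp (-(μ i / 2) * (y i) ^ 2) from hfun]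
    rw [MeasureTheory.integral_fintype_prod_volume_eq_prod (ι := Fin n)
      (f := fun i (v : ℝ) => Real.exp (-(μ i / 2) * v ^ 2))]
    exact Finset.prod_congr rfl fun i _ => integral_gaussian (μ i / 2)
  refine ⟨hint, ?_, hdetpos⟩
  rw [hI]
  have h2pi : (0:ℝ) < 2 * Real.pi := by positivity
  have step1 : ∀ i, Real.sqrt (Real.pi / (μ i / 2)) = (2 * Real.pi / μ i) ^ (1/2 : ℝ) := by
    intro i
    rw [Real.sqrt_eq_rpow]
    congr 1
    field_simp
  simp_rw [step1]
  rw [Real.finset_prod_rpow _ _ (fun i _ => div_nonneg h2pi.le (hμpos i).le) (1/2 : ℝ)]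
  rw [Finset.prod_div_distrib, Finset.prod_const, ← hdet, Finset.card_univ, Fintype.card_fin]
  rw [Real.div_rpow (by positivity) hdetpos.le]
  rw [← Real.rpow_natCast (2 * Real.pi) n, ← Real.rpow_mul h2pi.le]
  rw [div_eq_mul_inv, ← Real.rpow_neg hdetpos.le]
  rw [mul_one_div]
end
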